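/- For any N, L ∈ ℕ+, there exists a function φ : ℝ → ℝ implemented by a ReLU FNN with width at most 3N and depth at most L such that |φ(x) − x²| ≤ N^{−L} for every x ∈ [0,1]. -/

import Mathlib

open Real

noncomputable section

/-- `A` is an affine map from `ℝ^m` to `ℝ^n`. -/
def IsAffineMap (m n : ℕ) (A : (Fin m → ℝ) → (Fin n → ℝ)) : Prop :=
  ∃ (M : Matrix (Fin n) (Fin m) ℝ) (b : Fin n → ℝ), ∀ x, A x = M.mulVec x + b

/-- `φ : ℝ^d → ℝ` is realized by a ReLU network with exactly `L'` hidden layers,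
each of positive width at most `W`. -/
def ReLUNetRec (W : ℝ) : ℕ → ∀ d : ℕ, ((Fin d → ℝ) → ℝ) → Prop
  | 0, d, φ => ∃ A : (Fin d → ℝ) → (Fin 1 → ℝ), IsAffineMap d 1 A ∧ ∀ x, φ x = A x 0
  | L' + 1, d, φ => ∃ n : ℕ, 0 < n ∧ (n : ℝ) ≤ W ∧
      ∃ A : (Fin d → ℝ) → (Fin n → ℝ), IsAffineMap d n A ∧
        ∃ ψ : (Fin n → ℝ) → ℝ, ReLUNetRec W L' n ψ ∧
          ∀ x, φ x = ψ (fun i => max (A x i) 0)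

/-- `φ : ℝ^d → ℝ` is implemented by a ReLU FNN with width at most `W` and depth at most `D`. -/
def ImplementedBy (d : ℕ) (W D : ℝ) (φ : (Fin d → ℝ) → ℝ) : Prop :=
  ∃ L' : ℕ, (L' : ℝ) ≤ D ∧ ReLUNetRec W L' d φ

/-- one-dimensional-input version of `ImplementedBy`. -/
def ImplementedBy1 (W D : ℝ) (φ : ℝ → ℝ) : Prop :=
  ImplementedBy 1 W D (fun x => φ (x 0))

/-- two-dimensional-input version of `ImplementedBy`. -/
def ImplementedBy2 (W D : ℝ) (φ : ℝ → ℝ → ℝ) : Prop :=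
  ImplementedBy 2 W D (fun x => φ (x 0) (x 1))

namespace ReluSq

def sc (N j : ℕ) : ℝ := if j = 0 then (N:ℝ) else 2*N*(-1)^j
def gc (N j : ℕ) : ℝ := if j = 0 then ((N:ℝ)-1)/N else -2/N

def st (N : ℕ) (t : ℝ) : ℝ := ∑ j ∈ Finset.range N, sc N j * max (t - j/N) 0
def gg (N : ℕ) (t : ℝ) : ℝ := ∑ j ∈ Finset.range N, gc N j * max (t - j/N) 0

lemma sc_sum (N : ℕ) (hN : (N:ℝ) ≠ 0) (k : ℕ) (t : ℝ) :
    ∑ j ∈ Finset.range (k+1), sc N j * (t - j/N) = (-1)^k * (N*t - k - 1/2) + 1/2 := by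
  induction k with
  | zero => simp [sc]
  | succ k ih =>
    rw [Finset.sum_range_succ, ih, sc]
    simp only [Nat.succ_ne_zero, if_false]
    push_cast
    field_simp
    ring

lemma gc_sum (N : ℕ) (hN : (N:ℝ) ≠ 0) (k : ℕ) (t : ℝ) :
    ∑ j ∈ Finset.range (k+1), gc N j * (t - j/N)
      = t*(N-1-2*k)/N + k*(k+1)/N^2 := by
  induction k with
  | zero => simp [gc]; ring
  | succ k ih =>
    rw [Finset.sum_range_succ, ih, gc]
    simp only [Nat.succ_ne_zero, if_false]
    push_cast
    field_simp
    ring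

lemma split_eval (N : ℕ) (hN : 0 < N) (f : ℕ → ℝ) (k : ℕ) (hk : k < N) (t : ℝ)
    (h1 : (k:ℝ)/N ≤ t) (h2 : t ≤ ((k:ℝ)+1)/N) :
    ∑ j ∈ Finset.range N, f j * max (t - j/N) 0
      = ∑ j ∈ Finset.range (k+1), f j * (t - j/N) := by
  have hN0 : (0:ℝ) < N := by exact_mod_cast hN
  rw [← Finset.sum_range_add_sum_Ico _ (Nat.succ_le_of_lt hk)]
  have h0 : ∑ j ∈ Finset.Ico (k+1) N, f j * max (t - j/N) 0 = 0 := by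
    apply Finset.sum_eq_zero
    intro j hj
    have hj1 : k+1 ≤ j := (Finset.mem_Ico.mp hj).1
    have hcast : ((k:ℝ)+1) ≤ (j:ℝ) := by exact_mod_cast hj1
    have hle : t - (j:ℝ)/N ≤ 0 := by
      have : ((k:ℝ)+1)/N ≤ (j:ℝ)/N := by gcongr
      linarith
    rw [max_eq_right hle, mul_zero]
  rw [h0, add_zero]
  apply Finset.sum_congr rfl
  intro j hj
  have hj1 : j ≤ k := Nat.lt_succ_iff.mp (Finset.mem_range.mp hj)
  have hcast : (j:ℝ) ≤ (k:ℝ) := by exact_mod_cast hj1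
  have hge : 0 ≤ t - (j:ℝ)/N := by
    have : (j:ℝ)/N ≤ (k:ℝ)/N := by gcongr
    linarith
  rw [max_eq_left hge]

lemma st_eval (N : ℕ) (hN : 0 < N) (k : ℕ) (hk : k < N) (t : ℝ)
    (h1 : (k:ℝ)/N ≤ t) (h2 : t ≤ ((k:ℝ)+1)/N) :
    st N t = (-1)^k * (N*t - k - 1/2) + 1/2 := by
  have hN' : (N:ℝ) ≠ 0 := by positivity
  rw [st, split_eval N hN _ k hk t h1 h2, sc_sum N hN' k t]

lemma gg_eval (N : ℕ) (hN : 0 < N) (k : ℕ) (hk : k < N) (t : ℝ)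
    (h1 : (k:ℝ)/N ≤ t) (h2 : t ≤ ((k:ℝ)+1)/N) :
    gg N t = t*(N-1-2*k)/N + k*(k+1)/N^2 := by
  have hN' : (N:ℝ) ≠ 0 := by positivity
  rw [gg, split_eval N hN _ k hk t h1 h2, gc_sum N hN' k t]

lemma exists_k (N : ℕ) (hN : 0 < N) (t : ℝ) (h0 : 0 ≤ t) (h1 : t ≤ 1) :
    ∃ k : ℕ, k < N ∧ (k:ℝ)/N ≤ t ∧ t ≤ ((k:ℝ)+1)/N := by
  have hN0 : (0:ℝ) < N := by exact_mod_cast hN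
  by_cases hlt : (N:ℝ)*t < N
  · refine ⟨⌊(N:ℝ)*t⌋.toNat, ?_, ?_, ?_⟩
    · have hfl : (⌊(N:ℝ)*t⌋ : ℝ) ≤ (N:ℝ)*t := Int.floor_le _
      have h0' : (0:ℤ) ≤ ⌊(N:ℝ)*t⌋ := Int.floor_nonneg.mpr (by positivity)
      have : (⌊(N:ℝ)*t⌋ : ℝ) < N := lt_of_le_of_lt hfl hlt
      have : ⌊(N:ℝ)*t⌋ < (N:ℤ) := by exact_mod_cast this
      omega
    · rw [div_le_iff₀ hN0]
      have h0' : (0:ℤ) ≤ ⌊(N:ℝ)*t⌋ := Int.floor_nonneg.mpr (by positivity)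
      have : ((⌊(N:ℝ)*t⌋.toNat : ℤ) : ℝ) ≤ (N:ℝ)*t := by
        rw [Int.toNat_of_nonneg h0']; exact Int.floor_le _
      push_cast at this ⊢
      linarith
    · rw [le_div_iff₀ hN0]
      have h0' : (0:ℤ) ≤ ⌊(N:ℝ)*t⌋ := Int.floor_nonneg.mpr (by positivity)
      have h2 : (N:ℝ)*t < (⌊(N:ℝ)*t⌋ : ℝ) + 1 := Int.lt_floor_add_one _
      have : ((⌊(N:ℝ)*t⌋.toNat : ℤ) : ℝ) = (⌊(N:ℝ)*t⌋ : ℝ) := by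
        rw [Int.toNat_of_nonneg h0']
      push_cast at this ⊢
      rw [this]
      linarith [mul_comm t (N:ℝ)]
  · refine ⟨N-1, by omega, ?_, ?_⟩
    · have : ((N-1:ℕ):ℝ) = (N:ℝ) - 1 := by
        have : 1 ≤ N := hN
        push_cast [Nat.cast_sub this]
        ring
      rw [this, div_le_iff₀ hN0]
      push_neg at hlt
      nlinarith
    · have hc : ((N-1:ℕ):ℝ) = (N:ℝ) - 1 := by
        have : 1 ≤ N := hN
        push_cast [Nat.cast_sub this]
        ring
      rw [hc]
      rw [le_div_iff₀ hN0]
      nlinarith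



lemma st_mem (N : ℕ) (hN : 0 < N) {t : ℝ} (h0 : 0 ≤ t) (h1 : t ≤ 1) :
    0 ≤ st N t ∧ st N t ≤ 1 := by
  have hN0 : (0:ℝ) < N := by exact_mod_cast hN
  obtain ⟨k, hk, hk1, hk2⟩ := exists_k N hN t h0 h1
  rw [st_eval N hN k hk t hk1 hk2]
  have hk1' : (k:ℝ) ≤ N*t := by rw [div_le_iff₀ hN0] at hk1; linarith [mul_comm t (N:ℝ)]
  have hk2' : N*t ≤ (k:ℝ)+1 := by rw [le_div_iff₀ hN0] at hk2; linarith [mul_comm t (N:ℝ)]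
  rcases Nat.even_or_odd k with he | ho
  · rw [he.neg_one_pow]; constructor <;> nlinarith
  · rw [ho.neg_one_pow]; constructor <;> nlinarith

lemma key (N : ℕ) (hN : 0 < N) {t : ℝ} (h0 : 0 ≤ t) (h1 : t ≤ 1) :
    t*(1-t) - gg N t = st N t * (1 - st N t) / N^2 := by
  have hN0 : (0:ℝ) < N := by exact_mod_cast hN
  have hN' : (N:ℝ) ≠ 0 := ne_of_gt hN0
  obtain ⟨k, hk, hk1, hk2⟩ := exists_k N hN t h0 h1
  rw [st_eval N hN k hk t hk1 hk2, gg_eval N hN k hk t hk1 hk2]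
  rcases Nat.even_or_odd k with he | ho
  · rw [he.neg_one_pow]; field_simp; ring
  · rw [ho.neg_one_pow]; field_simp; ring

def tt (N : ℕ) : ℕ → ℝ → ℝ
  | 0, x => x
  | j+1, x => st N (tt N j x)

def uu (N : ℕ) : ℕ → ℝ → ℝ
  | 0, x => x
  | j+1, x => (N:ℝ)^2 * (uu N j x - gg N (tt N j x))

lemma invariant (N : ℕ) (hN : 0 < N) {x : ℝ} (h0 : 0 ≤ x) (h1 : x ≤ 1) (j : ℕ) :
    0 ≤ tt N j x ∧ tt N j x ≤ 1 ∧
      uu N j x = (N:ℝ)^(2*j) * x^2 + tt N j x * (1 - tt N j x) := by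
  have hN0 : (0:ℝ) < N := by exact_mod_cast hN
  have hN' : (N:ℝ) ≠ 0 := ne_of_gt hN0
  induction j with
  | zero => refine ⟨h0, h1, by simp [tt, uu]; ring⟩
  | succ j ih =>
    obtain ⟨ih0, ih1, ihu⟩ := ih
    obtain ⟨hs0, hs1⟩ := st_mem N hN ih0 ih1
    refine ⟨hs0, hs1, ?_⟩
    have hkey := key N hN ih0 ih1
    show (N:ℝ)^2 * (uu N j x - gg N (tt N j x)) = _
    rw [ihu]
    have : tt N (j+1) x = st N (tt N j x) := rfl
    rw [this]
    have hpow : (N:ℝ)^(2*(j+1)) = (N:ℝ)^(2*j) * (N:ℝ)^2 := by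
      rw [← pow_add]; ring_nf
    rw [hpow]
    field_simp at hkey ⊢
    nlinarith [hkey]



lemma isAffine_of (m n : ℕ) (M : Fin n → Fin m → ℝ) (b : Fin n → ℝ)
    (A : (Fin m → ℝ) → Fin n → ℝ)
    (h : ∀ v i, A v i = (∑ j, M i j * v j) + b i) : IsAffineMap m n A := by
  refine ⟨Matrix.of M, b, fun x => ?_⟩
  funext i
  rw [h]
  simp [Matrix.mulVec, dotProduct]

def enc (N : ℕ) (t y : ℝ) : Fin (N+1) → ℝ :=
  fun j => if (j:ℕ) < N then max (t - ((j:ℕ):ℝ)/N) 0 else y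

lemma sum_enc (N : ℕ) (f : ℕ → ℝ) (t y : ℝ) :
    ∑ j : Fin (N+1), (if (j:ℕ) < N then f (j:ℕ) else 0) * enc N t y j
      = ∑ j ∈ Finset.range N, f j * max (t - (j:ℝ)/N) 0 := by
  rw [Fin.sum_univ_castSucc]
  simp only [Fin.coe_castSucc, Fin.val_last, lt_irrefl, if_false, zero_mul, add_zero,
    enc, Fin.is_lt, if_true]
  exact Fin.sum_univ_eq_sum_range (fun m => f m * max (t - (m:ℝ)/N) 0) N

lemma sum_enc' (N : ℕ) (c t y : ℝ) :
    ∑ j : Fin (N+1), (if (j:ℕ) < N then 0 else c) * enc N t y j = c * y := by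
  rw [Fin.sum_univ_castSucc]
  simp [enc, Fin.is_lt]

def B (N : ℕ) : ℕ → ℝ → ℝ → ℝ
  | 0, _, y => y
  | j+1, t, y => B N j (st N t) ((N:ℝ)^2 * (y - gg N t))

lemma B_run (N : ℕ) (j : ℕ) : ∀ i x, B N j (tt N i x) (uu N i x) = uu N (i+j) x := by
  induction j with
  | zero => intro i x; rfl
  | succ j ih =>
    intro i x
    show B N j (st N (tt N i x)) ((N:ℝ)^2 * (uu N i x - gg N (tt N i x))) = _
    have h1 : st N (tt N i x) = tt N (i+1) x := rfl
    have h2 : (N:ℝ)^2 * (uu N i x - gg N (tt N i x)) = uu N (i+1) x := rfl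
    rw [h1, h2, ih (i+1) x]
    congr 1
    omega

lemma claim (N : ℕ) (hN : 0 < N) (c : ℝ) (m : ℕ) :
    ∃ ψ : (Fin (N+1) → ℝ) → ℝ, ReLUNetRec (3*(N:ℝ)) m (N+1) ψ ∧
      ∀ t y, 0 ≤ t → t ≤ 1 → t*(1-t) ≤ y →
        ψ (enc N t y) = c * B N (m+1) t y := by
  have hN0 : (0:ℝ) < N := by exact_mod_cast hN
  have hN1 : (1:ℝ) ≤ N := by exact_mod_cast hN
  induction m with
  | zero =>
    refine ⟨fun v => (∑ j : Fin (N+1),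
        ((if (j:ℕ) < N then (-(c*(N:ℝ)^2)) * gc N (j:ℕ) else 0)
          + (if (j:ℕ) < N then 0 else c*(N:ℝ)^2)) * v j) + 0, ?_, ?_⟩
    · exact ⟨fun v => fun _ => (∑ j : Fin (N+1),
        ((if (j:ℕ) < N then (-(c*(N:ℝ)^2)) * gc N (j:ℕ) else 0)
          + (if (j:ℕ) < N then 0 else c*(N:ℝ)^2)) * v j) + 0,
        isAffine_of _ _ _ _ _ (fun v i => rfl), fun v => rfl⟩
    · intro t y h0 h1 hy
      show (∑ j : Fin (N+1), _ * enc N t y j) + 0 = _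
      have hsplit : ∀ j : Fin (N+1),
          ((if (j:ℕ) < N then (-(c*(N:ℝ)^2)) * gc N (j:ℕ) else 0)
            + (if (j:ℕ) < N then 0 else c*(N:ℝ)^2)) * enc N t y j
          = (if (j:ℕ) < N then (fun m => (-(c*(N:ℝ)^2)) * gc N m) (j:ℕ) else 0) * enc N t y j
            + (if (j:ℕ) < N then 0 else c*(N:ℝ)^2) * enc N t y j := fun j => by ring
      rw [Finset.sum_congr rfl (fun j _ => hsplit j), Finset.sum_add_distrib,
        sum_enc N (fun m => (-(c*(N:ℝ)^2)) * gc N m) t y, sum_enc' N (c*(N:ℝ)^2) t y]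
      have hgg : ∑ j ∈ Finset.range N, (-(c*(N:ℝ)^2)) * gc N j * max (t - (j:ℝ)/N) 0
          = (-(c*(N:ℝ)^2)) * gg N t := by
        rw [gg, Finset.mul_sum]
        exact Finset.sum_congr rfl (fun j _ => by ring)
      rw [hgg]
      show _ = c * ((N:ℝ)^2 * (y - gg N t))
      ring
  | succ m ih =>
    obtain ⟨ψ, hnet, hsem⟩ := ih
    set A : (Fin (N+1) → ℝ) → Fin (N+1) → ℝ := fun v i =>
      (∑ j : Fin (N+1),
        (if (i:ℕ) < N then (if (j:ℕ) < N then sc N (j:ℕ) else 0)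
         else ((if (j:ℕ) < N then (-((N:ℝ)^2)) * gc N (j:ℕ) else 0)
           + (if (j:ℕ) < N then 0 else (N:ℝ)^2))) * v j)
      + (if (i:ℕ) < N then -(((i:ℕ):ℝ)/N) else 0) with hA
    have haff : IsAffineMap (N+1) (N+1) A :=
      isAffine_of _ _ _ _ A (fun v i => rfl)
    refine ⟨fun v => ψ (fun i => max (A v i) 0), ⟨N+1, by omega, by push_cast; linarith,
      A, haff, ψ, hnet, fun v => rfl⟩, ?_⟩
    intro t y h0 h1 hy
    have hst := st_mem N hN h0 h1
    have hkey := key N hN h0 h1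
    have hnn : 0 ≤ st N t * (1 - st N t) := by nlinarith [hst.1, hst.2]
    have hy' : st N t * (1 - st N t) ≤ (N:ℝ)^2 * (y - gg N t) := by
      have h3 : st N t * (1 - st N t) = (N:ℝ)^2 * (t*(1-t) - gg N t) := by
        rw [hkey]; field_simp
      nlinarith [h3]
    have hApos : ∀ i : Fin (N+1), (i:ℕ) < N →
        A (enc N t y) i = st N t - ((i:ℕ):ℝ)/N := by
      intro i hi
      rw [hA]
      simp only [hi, if_true]
      rw [sum_enc N (sc N) t y]
      have : st N t = ∑ j ∈ Finset.range N, sc N j * max (t - (j:ℝ)/N) 0 := rfl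
      rw [← this]
      ring
    have hAlast : ∀ i : Fin (N+1), ¬ (i:ℕ) < N →
        A (enc N t y) i = (N:ℝ)^2 * (y - gg N t) := by
      intro i hi
      rw [hA]
      simp only [hi, if_false]
      have hsplit : ∀ j : Fin (N+1),
          ((if (j:ℕ) < N then (-((N:ℝ)^2)) * gc N (j:ℕ) else 0)
            + (if (j:ℕ) < N then 0 else (N:ℝ)^2)) * enc N t y j
          = (if (j:ℕ) < N then (fun m => (-((N:ℝ)^2)) * gc N m) (j:ℕ) else 0) * enc N t y j
            + (if (j:ℕ) < N then 0 else (N:ℝ)^2) * enc N t y j := fun j => by ring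
      rw [Finset.sum_congr rfl (fun j _ => hsplit j), Finset.sum_add_distrib,
        sum_enc N (fun m => (-((N:ℝ)^2)) * gc N m) t y, sum_enc' N ((N:ℝ)^2) t y]
      have hgg : ∑ j ∈ Finset.range N, (-((N:ℝ)^2)) * gc N j * max (t - (j:ℝ)/N) 0
          = (-((N:ℝ)^2)) * gg N t := by
        rw [gg, Finset.mul_sum]
        exact Finset.sum_congr rfl (fun j _ => by ring)
      rw [hgg]
      ring
    have hmaps : (fun i => max (A (enc N t y) i) 0)
        = enc N (st N t) ((N:ℝ)^2 * (y - gg N t)) := by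
      funext i
      by_cases hi : (i:ℕ) < N
      · rw [hApos i hi]
        simp only [enc, hi, if_true]
      · rw [hAlast i hi]
        have hge : (0:ℝ) ≤ (N:ℝ)^2 * (y - gg N t) := le_trans hnn hy'
        simp only [enc, hi, if_false]
        exact max_eq_left hge
    show ψ (fun i => max (A (enc N t y) i) 0) = _
    rw [hmaps, hsem (st N t) ((N:ℝ)^2 * (y - gg N t)) hst.1 hst.2 hy']
    rfl

lemma renc_sc (N : ℕ) (s : ℝ) :
    ∑ j : Fin N, sc N (j:ℕ) * max (s - ((j:ℕ):ℝ)/N) 0 = st N s := by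
  rw [st]
  exact Fin.sum_univ_eq_sum_range (fun m => sc N m * max (s - (m:ℝ)/N) 0) N

lemma renc_out (N : ℕ) (hN : 0 < N) (c : ℝ) (s : ℝ) (hs : 0 ≤ s) :
    ∑ j : Fin N, ((if (j:ℕ) = 0 then c else 0) + (-c) * gc N (j:ℕ))
        * max (s - ((j:ℕ):ℝ)/N) 0 = c * (s - gg N s) := by
  have hsplit : ∀ j : Fin N,
      ((if (j:ℕ) = 0 then c else 0) + (-c) * gc N (j:ℕ)) * max (s - ((j:ℕ):ℝ)/N) 0
      = (if (j:ℕ) = 0 then c * max (s - ((j:ℕ):ℝ)/N) 0 else 0)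
        + (-c) * (gc N (j:ℕ) * max (s - ((j:ℕ):ℝ)/N) 0) := by
    intro j
    by_cases h : (j:ℕ) = 0 <;> simp [h] <;> ring
  rw [Finset.sum_congr rfl (fun j _ => hsplit j), Finset.sum_add_distrib]
  have h1 : ∑ j : Fin N, (if (j:ℕ) = 0 then c * max (s - ((j:ℕ):ℝ)/N) 0 else 0)
      = c * s := by
    rw [Fin.sum_univ_eq_sum_range (fun m => if m = 0 then c * max (s - (m:ℝ)/N) 0 else 0) N]
    rw [Finset.sum_ite_eq' (Finset.range N) 0 (fun m => c * max (s - (m:ℝ)/N) 0)]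
    simp [Finset.mem_range.mpr hN, max_eq_left hs]
  have h2 : ∑ j : Fin N, (-c) * (gc N (j:ℕ) * max (s - ((j:ℕ):ℝ)/N) 0)
      = (-c) * gg N s := by
    rw [← Finset.mul_sum, gg]
    congr 1
    exact Fin.sum_univ_eq_sum_range (fun m => gc N m * max (s - (m:ℝ)/N) 0) N
  rw [h1, h2]
  ring


end ReluSq

open ReluSq

set_option maxHeartbeats 1000000 in
/-- Lemma 5.1: ReLU FNNs of width `3N` and depth `L` approximate `x²` on `[0,1]`
within `N^{-L}`. -/
theorem relu_approx_square
    (N L : ℕ) (hN : 0 < N) (hL : 0 < L) :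
    ∃ φ : ℝ → ℝ,
      ImplementedBy1 (3 * (N : ℝ)) (L : ℝ) φ ∧
      ∀ x ∈ Set.Icc (0 : ℝ) 1, |φ x - x ^ 2| ≤ (N : ℝ) ^ (-(L : ℝ)) := by
  have hN0 : (0:ℝ) < N := by exact_mod_cast hN
  have hN1 : (1:ℝ) ≤ N := by exact_mod_cast hN
  have hrpow : (N:ℝ) ^ (-(L:ℝ)) = ((N:ℝ)^L)⁻¹ := by
    rw [← Real.rpow_natCast (N:ℝ) L, ← Real.rpow_neg (le_of_lt hN0)]
  have hpw1 : (1:ℝ) ≤ (N:ℝ)^L := one_le_pow₀ hN1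
  set A0 : (Fin 1 → ℝ) → Fin N → ℝ :=
    fun v i => (∑ j : Fin 1, 1 * v j) + (-(((i:ℕ):ℝ)/N)) with hA0
  have hA0aff : IsAffineMap 1 N A0 := isAffine_of _ _ _ _ A0 (fun v i => rfl)
  have hA0val : ∀ (v : Fin 1 → ℝ) (i : Fin N), A0 v i = v 0 - ((i:ℕ):ℝ)/N := by
    intro v i
    rw [hA0]
    simp
    ring
  by_cases hL2 : L = 1
  · -- depth-1 case
    subst hL2
    refine ⟨fun s => (∑ j : Fin N,
        ((if (j:ℕ) = 0 then 1 else 0) + (-1) * gc N (j:ℕ)) * max (s - ((j:ℕ):ℝ)/N) 0) + 0,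
      ⟨1, by norm_num, ?_⟩, ?_⟩
    · refine ⟨N, hN, by linarith, A0, hA0aff,
        fun v => (∑ j : Fin N, ((if (j:ℕ) = 0 then 1 else 0) + (-1) * gc N (j:ℕ)) * v j) + 0,
        ⟨fun v => fun _ => (∑ j : Fin N,
            ((if (j:ℕ) = 0 then 1 else 0) + (-1) * gc N (j:ℕ)) * v j) + 0,
          isAffine_of _ _ _ _ _ (fun v i => rfl), fun v => rfl⟩, ?_⟩
      intro x
      have : (fun i => max (A0 x i) 0) = fun i : Fin N => max (x 0 - ((i:ℕ):ℝ)/N) 0 :=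
        funext fun i => by rw [hA0val]
      rw [this]
    · intro s hs
      obtain ⟨hs0, hs1⟩ := hs
      have hval := renc_out N hN 1 s hs0
      simp only [one_mul] at hval
      show |((∑ j : Fin N,
        ((if (j:ℕ) = 0 then 1 else 0) + (-1) * gc N (j:ℕ)) * max (s - ((j:ℕ):ℝ)/N) 0) + 0)
          - s^2| ≤ _
      rw [add_zero, hval, hrpow]
      have hkey := key N hN hs0 hs1
      have hst := st_mem N hN hs0 hs1
      have heq : s - gg N s - s^2 = st N s * (1 - st N s) / (N:ℝ)^2 := by
        rw [← hkey]; ring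
      have hnn : 0 ≤ st N s * (1 - st N s) := by nlinarith [hst.1, hst.2]
      rw [heq, abs_of_nonneg (div_nonneg hnn (by positivity))]
      rw [pow_one, div_le_iff₀ (by positivity)]
      have hNN : (N:ℝ)⁻¹ * (N:ℝ)^2 = N := by field_simp
      rw [hNN]
      nlinarith [hst.1, hst.2]
  · -- depth ≥ 2 case
    have hL2' : 2 ≤ L := by omega
    set m := L - 2 with hm
    have hmL : m + 2 = L := by omega
    set c : ℝ := (((N:ℝ)^L * (N:ℝ)^L))⁻¹ with hc
    obtain ⟨ψ, hnet, hsem⟩ := claim N hN c m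
    set A1 : (Fin N → ℝ) → Fin (N+1) → ℝ := fun v i =>
      (∑ j : Fin N,
        (if (i:ℕ) < N then sc N (j:ℕ)
         else ((if (j:ℕ) = 0 then (N:ℝ)^2 else 0) + (-((N:ℝ)^2)) * gc N (j:ℕ))) * v j)
      + (if (i:ℕ) < N then -(((i:ℕ):ℝ)/N) else 0) with hA1
    have hA1aff : IsAffineMap N (N+1) A1 := isAffine_of _ _ _ _ A1 (fun v i => rfl)
    set φ₁ : (Fin N → ℝ) → ℝ := fun v => ψ (fun i => max (A1 v i) 0) with hφ₁
    have hnet1 : ReLUNetRec (3*(N:ℝ)) (m+1) N φ₁ :=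
      ⟨N+1, by omega, by push_cast; linarith, A1, hA1aff, ψ, hnet, fun v => rfl⟩
    refine ⟨fun s => φ₁ (fun i => max (s - ((i:ℕ):ℝ)/N) 0), ⟨m+2, ?_, ?_⟩, ?_⟩
    · rw [hmL]
    · refine ⟨N, hN, by linarith, A0, hA0aff, φ₁, hnet1, fun x => ?_⟩
      have : (fun i => max (A0 x i) 0) = fun i : Fin N => max (x 0 - ((i:ℕ):ℝ)/N) 0 :=
        funext fun i => by rw [hA0val]
      rw [this]
    · intro s hs
      obtain ⟨hs0, hs1⟩ := hs
      have hst := st_mem N hN hs0 hs1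
      have hkey := key N hN hs0 hs1
      have hnn : 0 ≤ st N s * (1 - st N s) := by nlinarith [hst.1, hst.2]
      have hsgg : 0 ≤ s - gg N s := by
        have h4 : 0 ≤ st N s * (1 - st N s) / (N:ℝ)^2 := div_nonneg hnn (by positivity)
        nlinarith [hkey, h4, sq_nonneg s]
      -- compute the first-layer transition
      have hmaps : (fun i => max (A1 (fun i : Fin N => max (s - ((i:ℕ):ℝ)/N) 0) i) 0)
          = enc N (st N s) ((N:ℝ)^2 * (s - gg N s)) := by
        funext i
        by_cases hi : (i:ℕ) < N
        · have : A1 (fun i : Fin N => max (s - ((i:ℕ):ℝ)/N) 0) i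
              = st N s - ((i:ℕ):ℝ)/N := by
            rw [hA1]
            simp only [hi, if_true]
            rw [renc_sc N s]
            ring
          rw [this]
          simp only [enc, hi, if_true]
        · have : A1 (fun i : Fin N => max (s - ((i:ℕ):ℝ)/N) 0) i
              = (N:ℝ)^2 * (s - gg N s) := by
            rw [hA1]
            simp only [hi, if_false]
            rw [renc_out N hN ((N:ℝ)^2) s hs0]
            ring
          rw [this]
          simp only [enc, hi, if_false]
          exact max_eq_left (by positivity)
      have hy' : st N s * (1 - st N s) ≤ (N:ℝ)^2 * (s - gg N s) := by
        have h3 : st N s * (1 - st N s) = (N:ℝ)^2 * (s*(1-s) - gg N s) := by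
          rw [hkey]; field_simp
        nlinarith [h3, sq_nonneg s]
      have hφval : φ₁ (fun i : Fin N => max (s - ((i:ℕ):ℝ)/N) 0)
          = c * uu N L s := by
        rw [hφ₁]
        show ψ _ = _
        rw [hmaps, hsem (st N s) ((N:ℝ)^2 * (s - gg N s)) hst.1 hst.2 hy']
        have h1 : st N s = tt N 1 s := rfl
        have h2 : (N:ℝ)^2 * (s - gg N s) = uu N 1 s := rfl
        rw [h1, h2, B_run N (m+1) 1 s]
        congr 2
        omega
      have hinv := invariant N hN hs0 hs1 L
      obtain ⟨ht0, ht1, huu⟩ := hinv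
      have hpowL : (N:ℝ)^(2*L) = (N:ℝ)^L * (N:ℝ)^L := by
        rw [two_mul, pow_add]
      have hdiff : φ₁ (fun i : Fin N => max (s - ((i:ℕ):ℝ)/N) 0) - s^2
          = c * (tt N L s * (1 - tt N L s)) := by
        rw [hφval, huu, hpowL, hc]
        have hne : (N:ℝ)^L * (N:ℝ)^L ≠ 0 := by positivity
        field_simp
        ring
      show |φ₁ (fun i : Fin N => max (s - ((i:ℕ):ℝ)/N) 0) - s^2| ≤ _
      have hc0 : 0 ≤ c := by rw [hc]; positivity
      have hq1 : tt N L s * (1 - tt N L s) ≤ 1 := by nlinarith [ht0, ht1]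
      have hq0 : 0 ≤ tt N L s * (1 - tt N L s) := by nlinarith [ht0, ht1]
      rw [hdiff, hrpow, abs_of_nonneg (mul_nonneg hc0 hq0)]
      calc c * (tt N L s * (1 - tt N L s)) ≤ c * 1 := by
            exact mul_le_mul_of_nonneg_left hq1 hc0
        _ = ((N:ℝ)^L * (N:ℝ)^L)⁻¹ := by rw [hc, mul_one]
        _ ≤ ((N:ℝ)^L)⁻¹ := by
            exact (inv_le_inv₀ (by positivity) (by positivity)).mpr (by nlinarith [hpw1])
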